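/- Let L be a compact topological orthoalgebra. Then the set Comp(L) of compatible pairs of L is closed in L × L. -/

import Mathlib

/-- An orthoalgebra: a partial commutative, associative operation `oplus`
(defined on the relation `perp`), with unique orthocomplements, in which
`a ⊥ a` forces `a = 0`. -/
structure Orthoalgebra (L : Type*) where
  perp : L → L → Prop
  oplus : L → L → L
  compl : L → L
  zero : L
  one : L
  perp_comm : ∀ a b, perp a b → perp b a
  oplus_comm : ∀ a b, perp a b → oplus a b = oplus b a
  assoc : ∀ a b c, perp b c → perp a (oplus b c) →
    perp a b ∧ perp (oplus a b) c ∧ oplus a (oplus b c) = oplus (oplus a b) c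
  perp_compl : ∀ a, perp a (compl a)
  oplus_compl : ∀ a, oplus a (compl a) = one
  compl_unique : ∀ a b, perp a b → oplus a b = one → b = compl a
  perp_self_eq_zero : ∀ a, perp a a → a = zero
  zero_def : compl one = zero

/-- The induced order: `a ≤ b` iff `a ⊥ b'`. -/
def Orthoalgebra.le {L : Type*} (A : Orthoalgebra L) (a b : L) : Prop :=
  A.perp a (A.compl b)

/-- The partial difference `b ⊖ a = (a ⊕ b')'` (the unique `c` with `b = a ⊕ c` when `a ≤ b`). -/
def Orthoalgebra.ominus {L : Type*} (A : Orthoalgebra L) (b a : L) : L :=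
  A.compl (A.oplus a (A.compl b))

/-- A topological orthoalgebra: `⊥` is closed, `⊕` is continuous on `⊥`,
and `'` is continuous. -/
structure IsTOA {L : Type*} [TopologicalSpace L] (A : Orthoalgebra L) : Prop where
  closed_perp : IsClosed {p : L × L | A.perp p.1 p.2}
  cont_oplus : ContinuousOn (fun p : L × L => A.oplus p.1 p.2) {p : L × L | A.perp p.1 p.2}
  cont_compl : Continuous A.compl

/-- Compatibility: `a` and `b` admit a Mackey decomposition. -/
def Orthoalgebra.Compat {L : Type*} (A : Orthoalgebra L) (a b : L) : Prop :=
  ∃ c, A.le c a ∧ A.le c b ∧ A.perp a (A.ominus b c)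

/-- An atom: a minimal nonzero element. -/
def Orthoalgebra.IsAtom' {L : Type*} (A : Orthoalgebra L) (a : L) : Prop :=
  a ≠ A.zero ∧ ∀ b, A.le b a → b = A.zero ∨ b = a

namespace Orthoalgebra

variable {L : Type*} (A : Orthoalgebra L)

lemma compl_compl' (b : L) : A.compl (A.compl b) = b := by
  have h1 := A.perp_comm _ _ (A.perp_compl b)
  have h2 : A.oplus (A.compl b) b = A.one := by
    rw [A.oplus_comm _ _ h1, A.oplus_compl]
  exact (A.compl_unique _ _ h1 h2).symm

lemma assoc' (a b c : L) (h1 : A.perp a b) (h2 : A.perp (A.oplus a b) c) :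
    A.perp b c ∧ A.perp a (A.oplus b c) ∧
      A.oplus (A.oplus a b) c = A.oplus a (A.oplus b c) := by
  have hba : A.perp b a := A.perp_comm _ _ h1
  have h2' : A.perp c (A.oplus b a) := by
    rw [A.oplus_comm _ _ hba]; exact A.perp_comm _ _ h2
  obtain ⟨hcb, hcba, heq⟩ := A.assoc c b a hba h2'
  have hbc : A.perp b c := A.perp_comm _ _ hcb
  have hbc' : A.oplus c b = A.oplus b c := A.oplus_comm _ _ hcb
  have hacb : A.perp a (A.oplus b c) := by
    rw [← hbc']; exact A.perp_comm _ _ hcba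
  refine ⟨hbc, hacb, ?_⟩
  have e1 : A.oplus (A.oplus a b) c = A.oplus c (A.oplus a b) :=
    A.oplus_comm _ _ h2
  rw [e1, A.oplus_comm _ _ h1, heq, hbc', A.oplus_comm _ _ (A.perp_comm _ _ hacb)]

lemma eq_zero_of_perp_one (x : L) (h : A.perp x A.one) : x = A.zero := by
  have h2 : A.perp x (A.oplus x (A.compl x)) := by rw [A.oplus_compl]; exact h
  exact A.perp_self_eq_zero x (A.assoc x x (A.compl x) (A.perp_compl x) h2).1

lemma oplus_zero (y : L) : A.perp y A.zero ∧ A.oplus y A.zero = y := by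
  set x := A.compl y with hx
  have hxy : A.compl x = y := A.compl_compl' y
  have h1 : A.perp x (A.compl x) := A.perp_compl x
  have h2 : A.perp (A.oplus x (A.compl x)) A.zero := by
    rw [A.oplus_compl, ← A.zero_def]; exact A.perp_compl A.one
  obtain ⟨hy0, hx', heq⟩ := A.assoc' x (A.compl x) A.zero h1 h2
  have h10 : A.oplus (A.oplus x (A.compl x)) A.zero = A.one := by
    rw [A.oplus_compl, ← A.zero_def, A.oplus_compl]
  rw [h10] at heq
  have := A.compl_unique x _ hx' heq.symm
  rw [hxy] at hy0 this
  exact ⟨hy0, this⟩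

lemma le_oplus (a b : L) (h : A.le a b) :
    A.perp a (A.ominus b a) ∧ A.oplus a (A.ominus b a) = b := by
  set c := A.ominus b a with hc
  have hd : A.perp (A.oplus a (A.compl b)) c := A.perp_compl _
  have h1 : A.perp (A.compl b) a := A.perp_comm _ _ h
  have h2 : A.perp (A.oplus (A.compl b) a) c := by
    rwa [A.oplus_comm _ _ h1]
  obtain ⟨hac, hb', heq⟩ := A.assoc' (A.compl b) a c h1 h2
  refine ⟨hac, ?_⟩
  have hone : A.oplus (A.compl b) (A.oplus a c) = A.one := by
    rw [← heq, A.oplus_comm _ _ h1, hc]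
    show A.oplus (A.oplus a (A.compl b)) (A.compl (A.oplus a (A.compl b))) = A.one
    exact A.oplus_compl _
  have := A.compl_unique _ _ hb' hone
  rw [A.compl_compl'] at this
  exact this

lemma le_antisymm' (a b : L) (h1 : A.le a b) (h2 : A.le b a) : a = b := by
  obtain ⟨hac, hacb⟩ := A.le_oplus a b h1
  obtain ⟨hbd, hbda⟩ := A.le_oplus b a h2
  set c := A.ominus b a
  set d := A.ominus a b
  have hperp : A.perp (A.oplus a c) d := by rw [hacb]; exact hbd
  obtain ⟨hcd, hacd, heq⟩ := A.assoc' a c d hac hperp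
  rw [hacb, hbda] at heq
  -- heq : a = A.oplus a (A.oplus c d)
  set f := A.oplus c d with hf
  have hafa' : A.perp (A.oplus a f) (A.compl a) := by
    rw [← heq]; exact A.perp_compl a
  obtain ⟨hfa', hafa'2, heq2⟩ := A.assoc' a f (A.compl a) hacd hafa'
  rw [← heq, A.oplus_compl] at heq2
  have hfa'eq : A.oplus f (A.compl a) = A.compl a := A.compl_unique a _ hafa'2 heq2.symm
  have h3 : A.perp (A.oplus f (A.compl a)) a := by
    rw [hfa'eq]; exact A.perp_comm _ _ (A.perp_compl a)
  obtain ⟨_, hf1, _⟩ := A.assoc' f (A.compl a) a hfa' h3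
  have haa1 : A.oplus (A.compl a) a = A.one := by
    rw [A.oplus_comm _ _ (A.perp_comm _ _ (A.perp_compl a)), A.oplus_compl]
  rw [haa1] at hf1
  have hf0 : f = A.zero := A.eq_zero_of_perp_one f hf1
  have hcd1 : A.perp (A.oplus c d) A.one := by rw [← hf, hf0, ← A.zero_def]
                                               exact A.perp_comm _ _ (A.perp_compl A.one)
  obtain ⟨hd1, _, _⟩ := A.assoc' c d A.one hcd hcd1
  have hd0 : d = A.zero := A.eq_zero_of_perp_one d hd1
  rw [hd0, (A.oplus_zero b).2] at hbda
  exact hbda.symm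

end Orthoalgebra

theorem comp_closed {L : Type*} [TopologicalSpace L] [CompactSpace L]
    (A : Orthoalgebra L) (hA : IsTOA A) :
    IsClosed {p : L × L | A.Compat p.1 p.2} := by
  -- L is Hausdorff since ≤ is a closed partial order
  have hle : IsClosed {p : L × L | A.le p.1 p.2} := by
    have : {p : L × L | A.le p.1 p.2} =
        (fun p : L × L => (p.1, A.compl p.2)) ⁻¹' {p : L × L | A.perp p.1 p.2} := rfl
    rw [this]
    exact hA.closed_perp.preimage (continuous_fst.prodMk (hA.cont_compl.comp continuous_snd))
  haveI hT2 : T2Space L := by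
    rw [t2_iff_isClosed_diagonal]
    have hdiag : Set.diagonal L =
        {p : L × L | A.le p.1 p.2} ∩ {p : L × L | A.le p.2 p.1} := by
      ext p
      constructor
      · rintro (h : p.1 = p.2)
        exact ⟨by simp only [Set.mem_setOf_eq, h]; exact A.perp_compl p.2,
               by simp only [Set.mem_setOf_eq, h]; exact A.perp_compl p.2⟩
      · rintro ⟨h1, h2⟩
        exact A.le_antisymm' p.1 p.2 h1 h2
    rw [hdiag]
    exact hle.inter (hle.preimage (continuous_snd.prodMk continuous_fst))
  -- the Mackey relation in L × L × L, with coordinates (a, c, b)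
  set S : Set (L × L × L) :=
    {p | A.le p.2.1 p.1 ∧ (A.le p.2.1 p.2.2 ∧ A.perp p.1 (A.ominus p.2.2 p.2.1))} with hS
  have hC1 : IsClosed {p : L × L × L | A.le p.2.1 p.1} := by
    have : {p : L × L × L | A.le p.2.1 p.1} =
        (fun p : L × L × L => (p.2.1, p.1)) ⁻¹' {p : L × L | A.le p.1 p.2} := rfl
    rw [this]
    exact hle.preimage ((continuous_fst.comp continuous_snd).prodMk continuous_fst)
  have hC2 : IsClosed {p : L × L × L | A.le p.2.1 p.2.2} := by
    have : {p : L × L × L | A.le p.2.1 p.2.2} =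
        (fun p : L × L × L => p.2) ⁻¹' {p : L × L | A.le p.1 p.2} := rfl
    rw [this]
    exact hle.preimage continuous_snd
  have hC3 : IsClosed ({p : L × L × L | A.le p.2.1 p.2.2} ∩
      (fun p : L × L × L => (p.1, A.ominus p.2.2 p.2.1)) ⁻¹'
        {q : L × L | A.perp q.1 q.2}) := by
    apply ContinuousOn.preimage_isClosed_of_isClosed _ hC2 hA.closed_perp
    have hg : Continuous (fun p : L × L × L => ((p.2.1, A.compl p.2.2) : L × L)) :=
      (continuous_fst.comp continuous_snd).prodMk
        (hA.cont_compl.comp (continuous_snd.comp continuous_snd))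
    have hmaps : Set.MapsTo (fun p : L × L × L => ((p.2.1, A.compl p.2.2) : L × L))
        {p : L × L × L | A.le p.2.1 p.2.2} {q : L × L | A.perp q.1 q.2} :=
      fun p hp => hp
    have hoplus : ContinuousOn (fun p : L × L × L => A.oplus p.2.1 (A.compl p.2.2))
        {p : L × L × L | A.le p.2.1 p.2.2} :=
      hA.cont_oplus.comp hg.continuousOn hmaps
    exact continuousOn_fst.prodMk ((hA.cont_compl.comp_continuousOn hoplus))
  have hSclosed : IsClosed S := by
    rw [hS]
    have : S = {p : L × L × L | A.le p.2.1 p.1} ∩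
        ({p : L × L × L | A.le p.2.1 p.2.2} ∩
          (fun p : L × L × L => (p.1, A.ominus p.2.2 p.2.1)) ⁻¹'
            {q : L × L | A.perp q.1 q.2}) := rfl
    rw [← hS, this]
    exact hC1.inter hC3
  have hScompact : IsCompact S := hSclosed.isCompact
  have himg : {p : L × L | A.Compat p.1 p.2} =
      (fun p : L × L × L => ((p.1, p.2.2) : L × L)) '' S := by
    ext ⟨a, b⟩
    constructor
    · rintro ⟨c, h1, h2, h3⟩
      exact ⟨(a, c, b), ⟨h1, h2, h3⟩, rfl⟩
    · rintro ⟨⟨a', c, b'⟩, ⟨h1, h2, h3⟩, heq⟩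
      obtain ⟨rfl, rfl⟩ : a' = a ∧ b' = b := by
        simpa using heq
      exact ⟨c, h1, h2, h3⟩
  rw [himg]
  exact (hScompact.image (continuous_fst.prodMk
    (continuous_snd.comp continuous_snd))).isClosed
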